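/- Every subset T of X × X containing the diagonal, with sup_x #(T[x]) ≤ k+1 and sup_x #(T⁻¹[x]) ≤ k+1 for some k, admits a label: a family L = {φ(0), φ(1), …, φ(N)} of subsets of T (for some N depending on k) with φ(0) the diagonal, whose union is T, and such that each φ(i) is the graph of a partially defined bijection (i.e., (z,x),(z,y) ∈ φ(i) ⟹ x = y, and (x,z),(y,z) ∈ φ(i) ⟹ x = y). -/

import Mathlib

lemma exists_injOn_lt {X : Type*} {S : Set X} {k : ℕ} (hf : S.Finite) (hc : S.ncard ≤ k) :
    ∃ f : X → ℕ, Set.InjOn f S ∧ ∀ y ∈ S, f y < k := by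
  classical
  haveI := hf.fintype
  have hcard : Fintype.card S ≤ k := by
    rwa [← Nat.card_coe_set_eq, Nat.card_eq_fintype_card] at hc
  let e := Fintype.equivFin S
  refine ⟨fun x => if h : x ∈ S then (e ⟨x, h⟩ : ℕ) else 0, ?_, ?_⟩
  · intro a ha b hb hab
    simp only [dif_pos ha, dif_pos hb] at hab
    have : e ⟨a, ha⟩ = e ⟨b, hb⟩ := Fin.ext hab
    have := e.injective this
    exact congrArg Subtype.val this
  · intro y hy
    simp only [dif_pos hy]
    exact lt_of_lt_of_le (e ⟨y, hy⟩).isLt hcard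

/-- Labeling lemma: a relation `T` containing the diagonal, whose sections in both
directions have at most `k + 1` elements, can be decomposed into `N + 1` graphs of
partially defined bijections, with `φ 0` the diagonal and `N` depending only on `k`. -/
theorem label_exists.{u} (k : ℕ) :
    ∃ N : ℕ, ∀ (X : Type u) (T : Set (X × X)),
      {p : X × X | p.1 = p.2} ⊆ T →
      (∀ x : X, {y | (y, x) ∈ T}.Finite ∧ {y | (y, x) ∈ T}.ncard ≤ k + 1) →
      (∀ x : X, {y | (x, y) ∈ T}.Finite ∧ {y | (x, y) ∈ T}.ncard ≤ k + 1) →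
      ∃ φ : Fin (N + 1) → Set (X × X),
        φ 0 = {p : X × X | p.1 = p.2} ∧
        (∀ i, φ i ⊆ T) ∧
        (⋃ i, φ i) = T ∧
        ∀ i, (∀ z x y : X, (z, x) ∈ φ i → (z, y) ∈ φ i → x = y) ∧
             (∀ x y z : X, (x, z) ∈ φ i → (y, z) ∈ φ i → x = y) := by
  refine ⟨k * k, fun X T hdiag hin hout => ?_⟩
  -- out-neighbors and in-neighbors minus the diagonal
  set A : X → Set X := fun x => {y | (x, y) ∈ T ∧ x ≠ y} with hA
  set B : X → Set X := fun x => {y | (y, x) ∈ T ∧ y ≠ x} with hB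
  have hAcard : ∀ x, (A x).Finite ∧ (A x).ncard ≤ k := by
    intro x
    have hsub : A x ⊆ {y | (x, y) ∈ T} \ {x} := by
      intro y hy; exact ⟨hy.1, fun h => hy.2 (by simpa using h.symm)⟩
    have hfin : (A x).Finite := ((hout x).1.subset (Set.diff_subset)).subset hsub
    refine ⟨hfin, ?_⟩
    have hx : x ∈ {y | (x, y) ∈ T} := hdiag (by simp)
    have h1 : ({y | (x, y) ∈ T} \ {x}).ncard ≤ k := by
      rw [Set.ncard_diff_singleton_of_mem hx]
      have := (hout x).2; omega
    calc (A x).ncard ≤ ({y | (x, y) ∈ T} \ {x}).ncard :=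
          Set.ncard_le_ncard hsub ((hout x).1.subset Set.diff_subset)
      _ ≤ k := h1
  have hBcard : ∀ x, (B x).Finite ∧ (B x).ncard ≤ k := by
    intro x
    have hsub : B x ⊆ {y | (y, x) ∈ T} \ {x} := by
      intro y hy; exact ⟨hy.1, fun h => hy.2 (by simpa using h)⟩
    have hfin : (B x).Finite := ((hin x).1.subset (Set.diff_subset)).subset hsub
    refine ⟨hfin, ?_⟩
    have hx : x ∈ {y | (y, x) ∈ T} := hdiag (by simp)
    have h1 : ({y | (y, x) ∈ T} \ {x}).ncard ≤ k := by
      rw [Set.ncard_diff_singleton_of_mem hx]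
      have := (hin x).2; omega
    calc (B x).ncard ≤ ({y | (y, x) ∈ T} \ {x}).ncard :=
          Set.ncard_le_ncard hsub ((hin x).1.subset Set.diff_subset)
      _ ≤ k := h1
  choose f hfinj hflt using fun x => exists_injOn_lt (hAcard x).1 (hAcard x).2
  choose g hginj hglt using fun x => exists_injOn_lt (hBcard x).1 (hBcard x).2
  set c : X × X → ℕ := fun p => f p.1 p.2 * k + g p.2 p.1 with hc
  have hclt : ∀ p : X × X, p ∈ T → p.1 ≠ p.2 → c p < k * k := by
    intro p hp hne
    have h1 : f p.1 p.2 < k := hflt _ _ ⟨hp, hne⟩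
    have h2 : g p.2 p.1 < k := hglt _ _ ⟨hp, hne⟩
    calc c p = f p.1 p.2 * k + g p.2 p.1 := rfl
      _ < f p.1 p.2 * k + k := by omega
      _ = (f p.1 p.2 + 1) * k := by ring
      _ ≤ k * k := Nat.mul_le_mul_right _ (by omega)
  -- decode
  have hdec : ∀ p q : X × X, p ∈ T → p.1 ≠ p.2 → q ∈ T → q.1 ≠ q.2 → c p = c q →
      f p.1 p.2 = f q.1 q.2 ∧ g p.2 p.1 = g q.2 q.1 := by
    intro p q hp hpne hq hqne hcc
    have h1 : g p.2 p.1 < k := hglt _ _ ⟨hp, hpne⟩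
    have h2 : g q.2 q.1 < k := hglt _ _ ⟨hq, hqne⟩
    have hk : 0 < k := by omega
    have e1 : c p % k = g p.2 p.1 := by
      show (f p.1 p.2 * k + g p.2 p.1) % k = _
      rw [Nat.mul_comm, Nat.mul_add_mod, Nat.mod_eq_of_lt h1]
    have e2 : c q % k = g q.2 q.1 := by
      show (f q.1 q.2 * k + g q.2 q.1) % k = _
      rw [Nat.mul_comm, Nat.mul_add_mod, Nat.mod_eq_of_lt h2]
    have e3 : c p / k = f p.1 p.2 := by
      show (f p.1 p.2 * k + g p.2 p.1) / k = _
      rw [Nat.mul_comm, Nat.mul_add_div hk, Nat.div_eq_of_lt h1, Nat.add_zero]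
    have e4 : c q / k = f q.1 q.2 := by
      show (f q.1 q.2 * k + g q.2 q.1) / k = _
      rw [Nat.mul_comm, Nat.mul_add_div hk, Nat.div_eq_of_lt h2, Nat.add_zero]
    constructor
    · rw [← e3, ← e4, hcc]
    · rw [← e1, ← e2, hcc]
  refine ⟨fun i => if i.val = 0 then {p : X × X | p.1 = p.2}
      else {p | p ∈ T ∧ p.1 ≠ p.2 ∧ c p + 1 = i.val}, by simp, ?_, ?_, ?_⟩
  · intro i p hp
    by_cases h : i.val = 0
    · simp only [h, if_pos] at hp; exact hdiag hp
    · simp only [h, if_neg, if_false] at hp; exact hp.1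
  · ext p
    simp only [Set.mem_iUnion]
    constructor
    · rintro ⟨i, hi⟩
      by_cases h : i.val = 0
      · simp only [h] at hi; simp only [if_pos] at hi; exact hdiag hi
      · simp only [if_neg h] at hi; exact hi.1
    · intro hp
      by_cases h : p.1 = p.2
      · exact ⟨0, by simp [h]⟩
      · refine ⟨⟨c p + 1, by have := hclt p hp h; omega⟩, ?_⟩
        simp [hp, h]
  · intro i
    by_cases h : i.val = 0
    · simp only [h, if_pos]
      exact ⟨fun z x y hx hy => by simp_all, fun x y z hx hy => by simp_all⟩
    · simp only [if_neg h]
      constructor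
      · intro z x y hx hy
        have := hdec (z, x) (z, y) hx.1 hx.2.1 hy.1 hy.2.1
          (by have := hx.2.2; have := hy.2.2; omega)
        exact hfinj z ⟨hx.1, hx.2.1⟩ ⟨hy.1, hy.2.1⟩ this.1
      · intro x y z hx hy
        have := hdec (x, z) (y, z) hx.1 hx.2.1 hy.1 hy.2.1
          (by have := hx.2.2; have := hy.2.2; omega)
        exact hginj z ⟨hx.1, hx.2.1⟩ ⟨hy.1, hy.2.1⟩ this.2
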